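/- For every integer g > 0 there exist infinitely many primes p such that: (i) p can be written as p = a² + 12 b² with a, b relatively prime integers, and every integer solution (a′, b′) of p = a′² + 12 b′² satisfies a′ = ±a and b′ = ±b; (ii) for every integer k with 0 < |k| ≤ g, the integer p + k has no primitive integer representation as a² + a b + b²; (iii) p has no primitive integer representation as 4(a² + a b + b²). -/

import Mathlib

/-- A prime `q ≡ 2 (mod 3)` cannot divide a primitively represented value of `x²+xy+y²`. -/
lemma no_eis (q : ℕ) (hq : q.Prime) (hq3 : q % 3 = 2) (a b : ℤ)
    (hgcd : Int.gcd a b = 1) (hdvd : (q : ℤ) ∣ a ^ 2 + a * b + b ^ 2) : False := by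
  haveI := Fact.mk hq
  have h0 : (a : ZMod q) ^ 2 + (a : ZMod q) * (b : ZMod q) + (b : ZMod q) ^ 2 = 0 := by
    have := (ZMod.intCast_zmod_eq_zero_iff_dvd _ q).mpr hdvd
    push_cast at this
    exact this
  by_cases hb : (b : ZMod q) = 0
  · have ha0 : (a : ZMod q) = 0 := by
      have h2 : (a : ZMod q) ^ 2 = 0 := by rw [hb] at h0; linear_combination h0
      exact (pow_eq_zero_iff two_ne_zero).mp h2
    have hqa : (q : ℤ) ∣ a := (ZMod.intCast_zmod_eq_zero_iff_dvd _ q).mp ha0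
    have hqb : (q : ℤ) ∣ b := (ZMod.intCast_zmod_eq_zero_iff_dvd _ q).mp hb
    have hg : (q : ℤ) ∣ (Int.gcd a b : ℤ) := Int.dvd_coe_gcd hqa hqb
    rw [hgcd] at hg
    have := Int.le_of_dvd one_pos hg
    have := hq.two_le
    omega
  · set t : ZMod q := (a : ZMod q) * (b : ZMod q)⁻¹ with ht
    have hbinv : (b : ZMod q) * (b : ZMod q)⁻¹ = 1 := ZMod.mul_inv_of_unit _ (Ne.isUnit hb)
    have htt : t ^ 2 + t + 1 = 0 := by
      have h2 : (t ^ 2 + t + 1) * (b : ZMod q) ^ 2 = 0 := by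
        have he : (t ^ 2 + t + 1) * (b : ZMod q) ^ 2 =
            (a : ZMod q) ^ 2 + (a : ZMod q) * (b : ZMod q) + (b : ZMod q) ^ 2 := by
          rw [ht]
          linear_combination ((a : ZMod q) ^ 2 * ((b : ZMod q)⁻¹ * (b : ZMod q) + 1) +
            (a : ZMod q) * (b : ZMod q)) * hbinv
        rw [he]; exact h0
      rcases mul_eq_zero.mp h2 with h | h
      · exact h
      · exact absurd (pow_eq_zero_iff two_ne_zero |>.mp h) hb
    have ht3 : t ^ 3 = 1 := by linear_combination (t - 1) * htt
    have ht1 : t ≠ 1 := by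
      intro h
      rw [h] at htt
      have h3 : ((3 : ℕ) : ZMod q) = 0 := by push_cast; linear_combination htt
      have hdvd3 : q ∣ 3 := (ZMod.natCast_eq_zero_iff 3 q).mp h3
      have := (Nat.prime_dvd_prime_iff_eq hq Nat.prime_three).mp hdvd3
      omega
    haveI : Fact (Nat.Prime 3) := ⟨Nat.prime_three⟩
    have hord : orderOf t = 3 := orderOf_eq_prime ht3 ht1
    have htne : t ≠ 0 := by
      intro h; rw [h] at ht3; simp at ht3
    have hpow : t ^ (q - 1) = 1 := ZMod.pow_card_sub_one_eq_one htne
    have h3dvd : 3 ∣ q - 1 := hord ▸ orderOf_dvd_of_pow_eq_one hpow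
    have := hq.two_le
    omega

lemma prime_ge_seven (p : ℕ) (hp : p.Prime) (h3 : p % 3 = 1) : 7 ≤ p := by
  by_contra h
  push_neg at h
  have h2 := hp.two_le
  interval_cases p <;> first | omega | norm_num at hp

lemma exists_sqrt_neg_three (p : ℕ) (hp : p.Prime) (h3 : p % 3 = 1) :
    ∃ c : ZMod p, c ^ 2 = -3 := by
  haveI := Fact.mk hp
  have hp7 := prime_ge_seven p hp h3
  obtain ⟨g, hg⟩ := IsCyclic.exists_generator (α := (ZMod p)ˣ)
  have hord : orderOf g = p - 1 := by
    rw [orderOf_eq_card_of_forall_mem_zpowers hg, Nat.card_eq_fintype_card, ZMod.card_units]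
  have h3d : 3 ∣ p - 1 := by omega
  set u := g ^ ((p - 1) / 3) with hu
  have hu3 : u ^ 3 = 1 := by
    rw [hu, ← pow_mul, Nat.div_mul_cancel h3d, ← hord]
    exact pow_orderOf_eq_one g
  have hu1 : u ≠ 1 := by
    intro h
    have hdd := orderOf_dvd_of_pow_eq_one (hu ▸ h)
    rw [hord] at hdd
    have := Nat.le_of_dvd (by omega) hdd
    omega
  set z : ZMod p := (u : ZMod p) with hz
  have hz3 : z ^ 3 = 1 := by
    rw [hz, ← Units.val_pow_eq_pow_val, hu3, Units.val_one]
  have hz1 : z ≠ 1 := fun h => hu1 (Units.ext h)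
  have hzz : z ^ 2 + z + 1 = 0 := by
    have hfac : (z - 1) * (z ^ 2 + z + 1) = 0 := by linear_combination hz3
    rcases mul_eq_zero.mp hfac with h | h
    · exact absurd (by linear_combination h) hz1
    · exact h
  exact ⟨2 * z + 1, by linear_combination 4 * hzz⟩

lemma prime_not_sq (p : ℕ) (hp : p.Prime) (t : ℤ) : (p : ℤ) ≠ t ^ 2 := by
  intro h
  have hnat : p = t.natAbs ^ 2 := by
    have := congrArg Int.natAbs h
    simpa [Int.natAbs_pow] using this
  rcases hp.eq_one_or_self_of_dvd t.natAbs ⟨t.natAbs, by rw [hnat]; ring⟩ with h1 | h1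
  · rw [h1] at hnat; simp at hnat; have := hp.two_le; omega
  · rw [h1] at hnat
    nlinarith [hp.two_le]

lemma prime_not_three_sq (p : ℕ) (hp : p.Prime) (h3 : p % 3 = 1) (t : ℤ) :
    (p : ℤ) ≠ 3 * t ^ 2 := by
  intro h
  have : (3 : ℤ) ∣ (p : ℤ) := ⟨t ^ 2, h⟩
  have h3p : (3 : ℕ) ∣ p := by exact_mod_cast this
  omega

lemma repr3 (p : ℕ) (hp : p.Prime) (h3 : p % 3 = 1) :
    ∃ x y : ℤ, (p : ℤ) = x ^ 2 + 3 * y ^ 2 := by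
  haveI := Fact.mk hp
  have hp7 := prime_ge_seven p hp h3
  obtain ⟨c, hc⟩ := exists_sqrt_neg_three p hp h3
  set m := Nat.sqrt p with hm
  have hcardlt : Fintype.card (ZMod p) < Fintype.card (Fin (m + 1) × Fin (m + 1)) := by
    rw [ZMod.card, Fintype.card_prod, Fintype.card_fin]
    exact Nat.lt_succ_sqrt p
  obtain ⟨⟨i, j⟩, ⟨i', j'⟩, hne, heq⟩ := Fintype.exists_ne_map_eq_of_card_lt
    (fun ij : Fin (m + 1) × Fin (m + 1) =>
      ((ij.1 : ℕ) : ZMod p) - c * ((ij.2 : ℕ) : ZMod p)) hcardlt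
  simp only at heq
  set x : ℤ := (i : ℕ) - (i' : ℕ) with hx
  set y : ℤ := (j : ℕ) - (j' : ℕ) with hy
  have hxy0 : ¬(x = 0 ∧ y = 0) := by
    rintro ⟨h1, h2⟩
    apply hne
    have : (i : ℕ) = (i' : ℕ) := by omega
    have h2' : (j : ℕ) = (j' : ℕ) := by omega
    exact Prod.ext (Fin.ext this) (Fin.ext h2')
  have hcast : ((x : ZMod p)) = c * ((y : ZMod p)) := by
    rw [hx, hy]
    push_cast
    linear_combination heq
  have hdvd : (p : ℤ) ∣ x ^ 2 + 3 * y ^ 2 := by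
    rw [← ZMod.intCast_zmod_eq_zero_iff_dvd]
    push_cast
    linear_combination ((x : ZMod p) + c * (y : ZMod p)) * hcast + ((y : ZMod p)) ^ 2 * hc
  have hxb : x ^ 2 ≤ (m : ℤ) ^ 2 := by
    have h1 : ((i : ℕ) : ℤ) ≤ m := by exact_mod_cast Nat.lt_succ_iff.mp i.isLt
    have h2 : ((i' : ℕ) : ℤ) ≤ m := by exact_mod_cast Nat.lt_succ_iff.mp i'.isLt
    have h0 : (0 : ℤ) ≤ (i : ℕ) := Int.natCast_nonneg _
    have h0' : (0 : ℤ) ≤ (i' : ℕ) := Int.natCast_nonneg _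
    nlinarith
  have hyb : y ^ 2 ≤ (m : ℤ) ^ 2 := by
    have h1 : ((j : ℕ) : ℤ) ≤ m := by exact_mod_cast Nat.lt_succ_iff.mp j.isLt
    have h2 : ((j' : ℕ) : ℤ) ≤ m := by exact_mod_cast Nat.lt_succ_iff.mp j'.isLt
    have h0 : (0 : ℤ) ≤ (j : ℕ) := Int.natCast_nonneg _
    have h0' : (0 : ℤ) ≤ (j' : ℕ) := Int.natCast_nonneg _
    nlinarith
  have hm2 : (m : ℤ) ^ 2 < p := by
    have hle : (m : ℤ) ^ 2 ≤ p := by exact_mod_cast Nat.sqrt_le' p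
    rcases lt_or_eq_of_le hle with h | h
    · exact h
    · exact absurd h.symm (prime_not_sq p hp m)
  have hpos : 0 < x ^ 2 + 3 * y ^ 2 := by
    rcases not_and_or.mp hxy0 with h | h
    · have : 0 < x ^ 2 := by positivity
      nlinarith [sq_nonneg y]
    · have : 0 < y ^ 2 := by positivity
      nlinarith [sq_nonneg x]
  have hlt : x ^ 2 + 3 * y ^ 2 < 4 * p := by nlinarith
  obtain ⟨s, hs⟩ := hdvd
  have hppos : (0 : ℤ) < p := by exact_mod_cast hp.pos
  have hs1 : 0 < s := by nlinarith
  have hs4 : s < 4 := by nlinarith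
  interval_cases s
  · exact ⟨x, y, by linarith⟩
  · -- x² + 3y² = 2p : impossible mod 4
    exfalso
    have hodd : p % 2 = 1 := by
      rcases Nat.even_or_odd p with he | ho
      · obtain ⟨k, hk⟩ := he
        have := hp.eq_one_or_self_of_dvd 2 ⟨k, by omega⟩
        omega
      · obtain ⟨k, hk⟩ := ho; omega
    obtain ⟨u, hu⟩ : ∃ u, p = 2 * u + 1 := ⟨p / 2, by omega⟩
    have h4 : ((x : ZMod 4)) ^ 2 + 3 * ((y : ZMod 4)) ^ 2 = 2 := by
      have hcongr := congrArg (fun t : ℤ => ((t : ZMod 4))) hs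
      push_cast at hcongr
      rw [hcongr, hu]
      push_cast
      have h40 : (4 : ZMod 4) = 0 := by decide
      linear_combination (u : ZMod 4) * h40
    have : ∀ a b : ZMod 4, a ^ 2 + 3 * b ^ 2 ≠ 2 := by decide
    exact this _ _ h4
  · -- x² + 3y² = 3p
    have h3x : (3 : ℤ) ∣ x := by
      have hdx : (3 : ℤ) ∣ x * x := ⟨(p : ℤ) - y ^ 2, by linear_combination hs⟩
      exact (Int.prime_three.dvd_or_dvd hdx).elim id id
    obtain ⟨z, hz⟩ := h3x
    refine ⟨y, z, ?_⟩
    have h9 : 3 * (p : ℤ) = 3 * (y ^ 2 + 3 * z ^ 2) := by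
      linear_combination (-1 : ℤ) * hs + (x + 3 * z) * hz
    have := mul_left_cancel₀ (by norm_num : (3 : ℤ) ≠ 0) h9
    exact this

lemma gcd_of_repr3 (p : ℕ) (hp : p.Prime) (x y : ℤ) (hxy : (p : ℤ) = x ^ 2 + 3 * y ^ 2) :
    Int.gcd x y = 1 := by
  set d := Int.gcd x y with hd
  have hdx : (d : ℤ) ∣ x := Int.gcd_dvd_left _ _
  have hdy : (d : ℤ) ∣ y := Int.gcd_dvd_right _ _
  have hdp : ((d ^ 2 : ℕ) : ℤ) ∣ (p : ℤ) := by
    push_cast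
    rw [hxy]
    exact dvd_add (pow_dvd_pow_of_dvd hdx 2) (Dvd.dvd.mul_left (pow_dvd_pow_of_dvd hdy 2) 3)
  have hdp' : d ^ 2 ∣ p := Int.natCast_dvd_natCast.mp hdp
  rcases hp.eq_one_or_self_of_dvd _ hdp' with h | h
  · exact Nat.eq_one_of_dvd_one (h ▸ dvd_pow_self d two_ne_zero)
  · exfalso
    exact prime_not_sq p hp d (by exact_mod_cast h.symm)

lemma unique3_nonneg (p : ℕ) (hp : p.Prime) (h3 : p % 3 = 1) (x y u v : ℤ)
    (hx0 : 0 ≤ x) (hy0 : 0 ≤ y) (hu0 : 0 ≤ u) (hv0 : 0 ≤ v)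
    (hxy : (p : ℤ) = x ^ 2 + 3 * y ^ 2) (huv : (p : ℤ) = u ^ 2 + 3 * v ^ 2) :
    u = x ∧ v = y := by
  have hppos : (0 : ℤ) < p := by exact_mod_cast hp.pos
  have hP : Prime (p : ℤ) := Int.prime_iff_natAbs_prime.mpr (by simpa using hp)
  have hkey : (p : ℤ) ∣ (x * v - u * y) * (x * v + u * y) :=
    ⟨v ^ 2 - y ^ 2, by linear_combination (-(v ^ 2) : ℤ) * hxy + y ^ 2 * huv⟩
  have hxne : x ≠ 0 := by
    intro h
    rw [h] at hxy
    exact prime_not_three_sq p hp h3 y (by linear_combination hxy)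
  have hvne : v ≠ 0 := by
    intro h
    rw [h] at huv
    exact prime_not_sq p hp u (by linear_combination huv)
  have hune : u ≠ 0 := by
    intro h
    rw [h] at huv
    exact prime_not_three_sq p hp h3 v (by linear_combination huv)
  rcases hP.dvd_or_dvd hkey with hd | hd
  · have hid : (p : ℤ) ^ 2 = (x * u + 3 * y * v) ^ 2 + 3 * (x * v - u * y) ^ 2 := by
      linear_combination (u ^ 2 + 3 * v ^ 2) * hxy + (p : ℤ) * huv
    by_cases hz : x * v - u * y = 0
    · have hgx : Int.gcd x y = 1 := gcd_of_repr3 p hp x y hxy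
      have hxu : x ∣ u := by
        refine Int.dvd_of_dvd_mul_left_of_gcd_one ⟨v, by linear_combination -hz⟩ hgx
      obtain ⟨t, ht⟩ := hxu
      have hveq : v = t * y := by
        have h1 : x * v = x * (t * y) := by linear_combination hz + y * ht
        exact mul_left_cancel₀ hxne h1
      have ht2 : ((t ^ 2 - 1) * p : ℤ) = 0 := by
        linear_combination -huv - (u + x * t) * ht - 3 * (v + t * y) * hveq + t ^ 2 * hxy
      rcases mul_eq_zero.mp ht2 with h | h
      · have htt : (t - 1) * (t + 1) = 0 := by linear_combination h
        rcases mul_eq_zero.mp htt with h' | h'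
        · have ht1 : t = 1 := by linarith
          rw [ht1] at ht hveq
          constructor <;> [linarith; linarith]
        · have ht1 : t = -1 := by linarith
          rw [ht1] at ht
          exfalso
          apply hxne
          have : x ≤ 0 := by linarith
          linarith
      · exact absurd h (by positivity)
    · exfalso
      have habs : (p : ℤ) ≤ |x * v - u * y| :=
        Int.le_of_dvd (abs_pos.mpr hz) ((dvd_abs _ _).mpr hd)
      have hsq : (p : ℤ) ^ 2 ≤ (x * v - u * y) ^ 2 := by
        nlinarith [sq_abs (x * v - u * y), abs_nonneg (x * v - u * y)]
      nlinarith [sq_nonneg (x * u + 3 * y * v)]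
  · exfalso
    have hid : (p : ℤ) ^ 2 = (x * u - 3 * y * v) ^ 2 + 3 * (x * v + u * y) ^ 2 := by
      linear_combination (u ^ 2 + 3 * v ^ 2) * hxy + (p : ℤ) * huv
    by_cases hz : x * v + u * y = 0
    · have h1 : x * v = 0 := by nlinarith [mul_nonneg hx0 hv0, mul_nonneg hu0 hy0]
      rcases mul_eq_zero.mp h1 with h | h
      · exact hxne h
      · exact hvne h
    · have habs : (p : ℤ) ≤ |x * v + u * y| :=
        Int.le_of_dvd (abs_pos.mpr hz) ((dvd_abs _ _).mpr hd)
      have hsq : (p : ℤ) ^ 2 ≤ (x * v + u * y) ^ 2 := by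
        nlinarith [sq_abs (x * v + u * y), abs_nonneg (x * v + u * y)]
      nlinarith [sq_nonneg (x * u - 3 * y * v)]

lemma unique3 (p : ℕ) (hp : p.Prime) (h3 : p % 3 = 1) (x y u v : ℤ)
    (hxy : (p : ℤ) = x ^ 2 + 3 * y ^ 2) (huv : (p : ℤ) = u ^ 2 + 3 * v ^ 2) :
    (u = x ∨ u = -x) ∧ (v = y ∨ v = -y) := by
  have h := unique3_nonneg p hp h3 |x| |y| |u| |v| (abs_nonneg x) (abs_nonneg y)
    (abs_nonneg u) (abs_nonneg v)
    (by rw [sq_abs, sq_abs]; exact hxy) (by rw [sq_abs, sq_abs]; exact huv)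
  exact ⟨abs_eq_abs.mp h.1, abs_eq_abs.mp h.2⟩

lemma gcd12 (p : ℕ) (hp : p.Prime) (a b : ℤ) (h : (p : ℤ) = a ^ 2 + 12 * b ^ 2) :
    Int.gcd a b = 1 := by
  set d := Int.gcd a b with hd
  have hdx : (d : ℤ) ∣ a := Int.gcd_dvd_left _ _
  have hdy : (d : ℤ) ∣ b := Int.gcd_dvd_right _ _
  have hdp : ((d ^ 2 : ℕ) : ℤ) ∣ (p : ℤ) := by
    push_cast
    rw [h]
    exact dvd_add (pow_dvd_pow_of_dvd hdx 2) (Dvd.dvd.mul_left (pow_dvd_pow_of_dvd hdy 2) 12)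
  have hdp' : d ^ 2 ∣ p := Int.natCast_dvd_natCast.mp hdp
  rcases hp.eq_one_or_self_of_dvd _ hdp' with hcase | hcase
  · exact Nat.eq_one_of_dvd_one (hcase ▸ dvd_pow_self d two_ne_zero)
  · exact absurd (by exact_mod_cast hcase.symm) (prime_not_sq p hp d)

lemma repr12 (p : ℕ) (hp : p.Prime) (h12 : p % 12 = 1) :
    ∃ a b : ℤ, (p : ℤ) = a ^ 2 + 12 * b ^ 2 := by
  have h3 : p % 3 = 1 := by omega
  obtain ⟨x, y, hxy⟩ := repr3 p hp h3
  rcases Int.even_or_odd y with ⟨e, he⟩ | ⟨e, he⟩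
  · exact ⟨x, e, by linear_combination hxy + 3 * (y + e + e) * he⟩
  · exfalso
    have h4 : p % 4 = 1 := by omega
    rcases Int.even_or_odd x with ⟨d, hd⟩ | ⟨d, hd⟩
    · have key : (4 : ℤ) ∣ (p : ℤ) - 3 :=
        ⟨d * d + 3 * (e * e) + 3 * e, by
          linear_combination hxy + (x + d + d) * hd + 3 * (y + 2 * e + 1) * he⟩
      obtain ⟨w, hw⟩ := key
      omega
    · have key : (4 : ℤ) ∣ (p : ℤ) - 4 :=
        ⟨d * d + d + 3 * (e * e) + 3 * e, by
          linear_combination hxy + (x + 2 * d + 1) * hd + 3 * (y + 2 * e + 1) * he⟩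
      obtain ⟨w, hw⟩ := key
      omega

lemma unique12 (p : ℕ) (hp : p.Prime) (h3 : p % 3 = 1) (a b a' b' : ℤ)
    (h : (p : ℤ) = a ^ 2 + 12 * b ^ 2) (h' : (p : ℤ) = a' ^ 2 + 12 * b' ^ 2) :
    (a' = a ∨ a' = -a) ∧ (b' = b ∨ b' = -b) := by
  have h1 : (p : ℤ) = a ^ 2 + 3 * (2 * b) ^ 2 := by linear_combination h
  have h2 : (p : ℤ) = a' ^ 2 + 3 * (2 * b') ^ 2 := by linear_combination h'
  obtain ⟨ha, hb⟩ := unique3 p hp h3 a (2 * b) a' (2 * b') h1 h2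
  refine ⟨ha, ?_⟩
  rcases hb with hh | hh
  · left; linarith
  · right; linarith

lemma int_crt (m n a b : ℤ) (h : IsCoprime m n) :
    ∃ r : ℤ, r ≡ a [ZMOD m] ∧ r ≡ b [ZMOD n] := by
  obtain ⟨u, v, huv⟩ := h
  refine ⟨a * v * n + b * u * m, ?_, ?_⟩
  · have : m ∣ a - (a * v * n + b * u * m) :=
      ⟨u * (a - b), by linear_combination (-a) * huv⟩
    exact Int.modEq_iff_dvd.mpr this
  · have : n ∣ b - (a * v * n + b * u * m) :=
      ⟨v * (b - a), by linear_combination (-b) * huv⟩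
    exact Int.modEq_iff_dvd.mpr this

lemma build (s : Finset ℤ) (h0 : ∀ k ∈ s, k ≠ 0) :
    ∃ (M : ℕ) (r : ℤ) (q : ℤ → ℕ), 0 < M ∧ 12 ∣ M ∧ r ≡ 1 [ZMOD (12 : ℕ)] ∧
      IsCoprime r (M : ℤ) ∧
      ∀ k ∈ s, (q k).Prime ∧ (q k) % 3 = 2 ∧ (q k) ∣ M ∧ r ≡ -k [ZMOD (q k : ℕ)] := by
  classical
  induction s using Finset.induction_on with
  | empty =>
    exact ⟨12, 1, fun _ => 5, by norm_num, dvd_refl 12, Int.ModEq.refl 1,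
      isCoprime_one_left, by simp⟩
  | @insert k₀ s hk₀s ih =>
    obtain ⟨M, r, q, hMpos, hM12, hr12, hrM, hq⟩ := ih (fun k hk => h0 k (Finset.mem_insert_of_mem hk))
    have hk₀ : k₀ ≠ 0 := h0 k₀ (Finset.mem_insert_self _ _)
    obtain ⟨Q, hQgt, hQp, hQmod⟩ :=
      Nat.forall_exists_prime_gt_and_eq_mod (q := 3) (a := 2) (by decide) (max M k₀.natAbs)
    have hQ3 : Q % 3 = 2 := by
      have h := (ZMod.natCast_eq_natCast_iff Q 2 3).mp (by exact_mod_cast hQmod)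
      unfold Nat.ModEq at h
      omega
    have hQM : ¬ Q ∣ M := fun hdvd => by
      have := Nat.le_of_dvd hMpos hdvd
      omega
    have hco : Nat.Coprime M Q := ((Nat.Prime.coprime_iff_not_dvd hQp).mpr hQM).symm
    have hcoZ : IsCoprime (M : ℤ) (Q : ℤ) := by
      rw [Int.isCoprime_iff_gcd_eq_one]
      simpa using hco
    obtain ⟨r', hr'M, hr'Q⟩ := int_crt (M : ℤ) (Q : ℤ) r (-k₀) hcoZ
    have hQpos : 0 < Q := hQp.pos
    refine ⟨M * Q, r', fun x => if x = k₀ then Q else q x, Nat.mul_pos hMpos hQpos,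
      hM12.mul_right Q, ?_, ?_, ?_⟩
    · have h12M : ((12 : ℕ) : ℤ) ∣ (M : ℤ) := by exact_mod_cast hM12
      exact ((hr'M.of_dvd h12M).trans hr12)
    · push_cast
      refine IsCoprime.mul_right ?_ ?_
      · obtain ⟨t, ht⟩ := (Int.modEq_iff_dvd.mp hr'M)
        have : r' = r + (M : ℤ) * (-t) := by linarith
        rw [this]
        exact IsCoprime.add_mul_left_left hrM (-t)
      · rw [Int.isCoprime_iff_gcd_eq_one]
        by_contra hne
        have hgd : (Int.gcd r' (Q : ℤ)) ∣ Q := by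
          have := Int.gcd_dvd_right (a := r') (b := (Q : ℤ))
          exact_mod_cast this
        rcases (Nat.Prime.eq_one_or_self_of_dvd hQp _ hgd) with h1 | h1
        · exact hne h1
        · have hQr' : (Q : ℤ) ∣ r' := h1 ▸ Int.gcd_dvd_left _ _
          have hQk : (Q : ℤ) ∣ k₀ := by
            have hd := Int.modEq_iff_dvd.mp hr'Q
            have h2 : (Q : ℤ) ∣ -k₀ := by
              have := dvd_add hd hQr'
              simpa using this
            exact dvd_neg.mp h2
          have hQkn : Q ∣ k₀.natAbs := by
            rwa [← Int.natCast_dvd_natCast, Int.dvd_natAbs]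

          have := Nat.le_of_dvd (Int.natAbs_pos.mpr hk₀) hQkn
          omega
    · intro k hk
      rcases Finset.mem_insert.mp hk with rfl | hks
      · simp only [if_pos rfl]
        exact ⟨hQp, hQ3, Dvd.intro_left M rfl, hr'Q⟩
      · have hne : k ≠ k₀ := fun h => hk₀s (h ▸ hks)
        simp only [if_neg hne]
        obtain ⟨hqp, hq3, hqM, hqmod⟩ := hq k hks
        refine ⟨hqp, hq3, hqM.mul_right Q, ?_⟩
        have hdM : ((q k : ℕ) : ℤ) ∣ (M : ℤ) := by exact_mod_cast hqM
        exact (hr'M.of_dvd hdM).trans hqmod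

/-- For every integer `g > 0` there are infinitely many primes `p` such that:
(i) `p = a² + 12 b²` for some relatively prime integers `a, b`, and every integer solution
`(a', b')` of `p = a'² + 12 b'²` satisfies `a' = ±a` and `b' = ±b`;
(ii) for `0 < |k| ≤ g`, the integer `p + k` has no primitive representation as `a² + a b + b²`;
(iii) `p` has no primitive representation as `4(a² + a b + b²)`. -/
theorem stmt_6 (g : ℤ) (hg : 0 < g) :
    {p : ℕ | p.Prime ∧
      (∃ a b : ℤ, Int.gcd a b = 1 ∧ (p : ℤ) = a ^ 2 + 12 * b ^ 2 ∧
        ∀ a' b' : ℤ, (p : ℤ) = a' ^ 2 + 12 * b' ^ 2 →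
          (a' = a ∨ a' = -a) ∧ (b' = b ∨ b' = -b)) ∧
      (∀ k : ℤ, 0 < |k| → |k| ≤ g →
        ¬ ∃ a b : ℤ, Int.gcd a b = 1 ∧ (p : ℤ) + k = a ^ 2 + a * b + b ^ 2) ∧
      (¬ ∃ a b : ℤ, Int.gcd a b = 1 ∧
        (p : ℤ) = 4 * (a ^ 2 + a * b + b ^ 2))}.Infinite := by
  classical
  set s : Finset ℤ := (Finset.Icc (-g) g).erase 0 with hs
  obtain ⟨M, r, q, hMpos, hM12, hr12, hrM, hq⟩ :=
    build s (fun k hk => (Finset.mem_erase.mp hk).1)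
  haveI : NeZero M := ⟨hMpos.ne'⟩
  have hunit : IsUnit ((r : ℤ) : ZMod M) := by
    obtain ⟨u, v, huv⟩ := hrM
    refine IsUnit.of_mul_eq_one ((u : ℤ) : ZMod M) ?_
    have := congrArg (fun t : ℤ => ((t : ZMod M))) huv
    push_cast at this
    rw [ZMod.natCast_self] at this
    push_cast at this
    linear_combination this
  have hinf := Nat.infinite_setOfPred_prime_and_eq_mod (q := M) (a := ((r : ℤ) : ZMod M)) hunit
  refine hinf.mono ?_
  rintro p ⟨hp, hpr⟩
  have hmodM : (p : ℤ) ≡ r [ZMOD (M : ℕ)] := by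
    rw [← ZMod.intCast_eq_intCast_iff]
    push_cast
    exact_mod_cast hpr
  have h12Z : ((12 : ℕ) : ℤ) ∣ (M : ℤ) := by exact_mod_cast hM12
  have hm12 : (p : ℤ) ≡ 1 [ZMOD (12 : ℕ)] := (hmodM.of_dvd h12Z).trans hr12
  have hp12 : p % 12 = 1 := by
    obtain ⟨w, hw⟩ := Int.modEq_iff_dvd.mp hm12
    omega
  have hp3 : p % 3 = 1 := by omega
  refine ⟨hp, ?_, ?_, ?_⟩
  · obtain ⟨a, b, hab⟩ := repr12 p hp hp12
    exact ⟨a, b, gcd12 p hp a b hab, hab,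
      fun a' b' h' => unique12 p hp hp3 a b a' b' hab h'⟩
  · intro k hk0 hkg
    have hks : k ∈ s := by
      rw [hs, Finset.mem_erase, Finset.mem_Icc]
      rcases abs_le.mp hkg with ⟨h1, h2⟩
      refine ⟨fun h => by simp [h] at hk0, h1, h2⟩
    obtain ⟨hqp, hq3, hqM, hqmod⟩ := hq k hks
    rintro ⟨a, b, hgcd, heq⟩
    have hdM : ((q k : ℕ) : ℤ) ∣ (M : ℤ) := by exact_mod_cast hqM
    have hmodq : (p : ℤ) ≡ -k [ZMOD (q k : ℕ)] := (hmodM.of_dvd hdM).trans hqmod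
    have hdvd : ((q k : ℕ) : ℤ) ∣ (p : ℤ) + k := by
      have := Int.modEq_iff_dvd.mp hmodq
      -- this : ↑(q k) ∣ -k - ↑p
      have h2 : ((q k : ℕ) : ℤ) ∣ -((p : ℤ) + k) := by
        convert this using 1
        ring
      exact dvd_neg.mp h2
    rw [heq] at hdvd
    exact no_eis (q k) hqp hq3 a b hgcd hdvd
  · rintro ⟨a, b, hgcd, heq⟩
    have h4 : (4 : ℤ) ∣ (p : ℤ) := ⟨a ^ 2 + a * b + b ^ 2, heq⟩
    have h4n : (4 : ℕ) ∣ p := by exact_mod_cast h4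
    rcases hp.eq_one_or_self_of_dvd 4 h4n with h | h <;> omega
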